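/- Over a field of characteristic zero, the multilinear polynomial Q obtained by reducing (x_1 + ... + x_n)^n modulo the ideal generated by {x_i^2 - x_i : i in [n]} has the monomial x_1·x_2···x_n appearing with nonzero coefficient (in fact with coefficient n!), and consequently the span of all partial derivatives of Q has dimension at least 2^n. -/

import Mathlib

open MvPolynomial Finset

set_option linter.unusedSectionVars false
set_option maxHeartbeats 1600000

namespace Stmt3Aux

variable {F : Type*} [Field F] [CharZero F] {n : ℕ}

noncomputable def mono (S : Finset (Fin n)) : Fin n →₀ ℕ := ∑ i ∈ S, Finsupp.single i 1

lemma mono_apply (S : Finset (Fin n)) (j : Fin n) :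
    mono S j = if j ∈ S then 1 else 0 := by
  classical
  rw [mono, Finset.sum_apply']
  simp [Finsupp.single_apply]

lemma mono_univ_eq : (mono univ : Fin n →₀ ℕ) = Finsupp.equivFunOnFinite.symm fun _ => 1 := by
  ext j
  simp [mono_apply]

lemma coeff_pderiv' (i : Fin n) (p : MvPolynomial (Fin n) F) (m : Fin n →₀ ℕ) :
    coeff m (pderiv i p) = ((m i + 1 : ℕ) : F) * coeff (m + Finsupp.single i 1) p := by
  induction p using MvPolynomial.induction_on' with
  | add p q hp hq => simp [hp, hq, mul_add]
  | monomial d a =>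
    rw [pderiv_monomial, coeff_monomial, coeff_monomial]
    by_cases h : d i = 0
    · have h1 : d - Finsupp.single i 1 = d := by
        ext j
        rcases eq_or_ne j i with rfl | hj
        · simp [h]
        · simp [Finsupp.single_apply, Ne.symm hj]
      have h2 : ¬ (d = m + Finsupp.single i 1) := by
        intro hd
        have := congrArg (fun f : Fin n →₀ ℕ => f i) hd
        simp [h] at this
      rw [h1, if_neg h2]
      split <;> simp_all
    · have hle : Finsupp.single i 1 ≤ d := by
        rw [Finsupp.single_le_iff]; omega
      have hiff : d - Finsupp.single i 1 = m ↔ d = m + Finsupp.single i 1 := by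
        constructor
        · intro hd; rw [← hd, tsub_add_cancel_of_le hle]
        · intro hd; rw [hd, add_tsub_cancel_right]
      rcases eq_or_ne (d - Finsupp.single i 1) m with he | he
      · rw [if_pos he, if_pos (hiff.1 he)]
        have : d i = m i + 1 := by
          have := congrArg (fun f : Fin n →₀ ℕ => f i) (hiff.1 he)
          simpa using this
        rw [this]
        push_cast
        ring
      · rw [if_neg he, if_neg (fun hd => he (hiff.2 hd))]
        ring

lemma coeff_foldr (l : List (Fin n)) (hl : l.Nodup) (p : MvPolynomial (Fin n) F)
    (m : Fin n →₀ ℕ) :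
    coeff m (l.foldr (fun i q => pderiv i q) p)
      = (∏ i ∈ l.toFinset, ((m i + 1 : ℕ) : F)) *
        coeff (m + ∑ i ∈ l.toFinset, Finsupp.single i 1) p := by
  induction l generalizing m with
  | nil => simp
  | cons i l ih =>
    have hi : i ∉ l := (List.nodup_cons.1 hl).1
    have hil : i ∉ l.toFinset := by simpa using hi
    rw [List.foldr_cons, coeff_pderiv', ih (List.nodup_cons.1 hl).2,
      List.toFinset_cons, Finset.prod_insert hil, Finset.sum_insert hil]
    have hprod : ∀ j ∈ l.toFinset, ((((m + Finsupp.single i 1 : Fin n →₀ ℕ) j) + 1 : ℕ) : F)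
        = ((m j + 1 : ℕ) : F) := by
      intro j hj
      have : j ≠ i := by rintro rfl; exact hil hj
      simp [Finsupp.single_apply, Ne.symm this]
    rw [Finset.prod_congr rfl hprod]
    rw [show m + Finsupp.single i 1 + ∑ j ∈ l.toFinset, Finsupp.single j 1
        = m + (Finsupp.single i 1 + ∑ j ∈ l.toFinset, Finsupp.single j 1) from add_assoc ..]
    ring

lemma foldr_pderiv_pow (l : List (Fin n)) (m : ℕ) :
    l.foldr (fun i q => pderiv i q) ((∑ i, X i : MvPolynomial (Fin n) F) ^ m)
      = (m.descFactorial l.length : MvPolynomial (Fin n) F) * (∑ i, X i) ^ (m - l.length) := by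
  induction l with
  | nil => simp
  | cons i l ih =>
    rw [List.foldr_cons, ih]
    have hX : pderiv i (∑ j, X j : MvPolynomial (Fin n) F) = 1 := by
      rw [map_sum]
      classical
      simp [pderiv_X, Finset.sum_pi_single']
    have hC : (m.descFactorial l.length : MvPolynomial (Fin n) F)
        = C ((m.descFactorial l.length : F)) := by simp
    rw [hC, pderiv_C_mul, pderiv_pow, hX, mul_one]
    rw [List.length_cons, Nat.descFactorial_succ]
    have : m - l.length - 1 = m - (l.length + 1) := by omega
    rw [this]
    push_cast
    rw [hC]
    ring

lemma sum_compl_pow (S : Finset (Fin n)) :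
    ∑ T : Finset (Fin n), (-1:F)^(n - T.card) * (if S ⊆ T then 1 else 0)
      = if S = univ then 1 else 0 := by
  classical
  rw [show (∑ T : Finset (Fin n), (-1:F)^(n - T.card) * (if S ⊆ T then 1 else 0))
      = ∑ T ∈ Finset.univ.filter (fun T => S ⊆ T), (-1:F)^(n - T.card) from by
    rw [Finset.sum_filter]; exact Finset.sum_congr rfl fun T _ => by split <;> simp]
  have hre : ∑ T ∈ Finset.univ.filter (fun T => S ⊆ T), (-1:F)^(n - T.card)
      = ∑ U ∈ Sᶜ.powerset, (-1:F)^(U.card) := by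
    apply Finset.sum_nbij' (i := fun T => Tᶜ) (j := fun U => Uᶜ)
    · intro T hT
      simp only [Finset.mem_filter, Finset.mem_univ, true_and] at hT
      simpa [Finset.mem_powerset] using Finset.compl_subset_compl.2 hT
    · intro U hU
      simp only [Finset.mem_filter, Finset.mem_univ, true_and]
      have h1 : U ⊆ Sᶜ := Finset.mem_powerset.1 hU
      have h2 : Sᶜᶜ ⊆ Uᶜ := Finset.compl_subset_compl.2 h1
      simpa using h2
    · intro T _; simp
    · intro U _; simp
    · intro T _
      congr 1
      rw [Finset.card_compl]
      simp
  rw [hre]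
  have hint := Finset.sum_powerset_neg_one_pow_card (x := Sᶜ)
  have hc : ∑ U ∈ Sᶜ.powerset, (-1:F)^U.card = if Sᶜ = ∅ then 1 else 0 := by
    have h2 := congrArg (fun z : ℤ => (z : F)) hint
    push_cast at h2
    split at h2 <;> split <;> simp_all
  rw [hc]
  have : Sᶜ = ∅ ↔ S = univ := by simp
  split <;> split <;> simp_all

lemma L_eq (p : MvPolynomial (Fin n) F) :
    ∑ T : Finset (Fin n), (-1:F)^(n - T.card) * eval (fun i => if i ∈ T then (1:F) else 0) p
      = ∑ d ∈ p.support.filter (fun d => d.support = Finset.univ), coeff d p := by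
  classical
  have heval : ∀ T : Finset (Fin n), eval (fun i => if i ∈ T then (1:F) else 0) p
      = ∑ d ∈ p.support, coeff d p * (if d.support ⊆ T then 1 else 0) := by
    intro T
    rw [eval_eq]
    refine Finset.sum_congr rfl fun d hd => ?_
    congr 1
    by_cases hsub : d.support ⊆ T
    · rw [if_pos hsub]
      apply Finset.prod_eq_one
      intro i hi
      rw [if_pos (hsub hi), one_pow]
    · rw [if_neg hsub]
      obtain ⟨i, hi, hiT⟩ := Finset.not_subset.1 hsub
      refine Finset.prod_eq_zero hi ?_
      rw [if_neg hiT]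
      exact zero_pow (Finsupp.mem_support_iff.1 hi)
  calc ∑ T : Finset (Fin n), (-1:F)^(n - T.card) * eval (fun i => if i ∈ T then (1:F) else 0) p
      = ∑ T : Finset (Fin n), ∑ d ∈ p.support,
          coeff d p * ((-1:F)^(n - T.card) * (if d.support ⊆ T then 1 else 0)) := by
        refine Finset.sum_congr rfl fun T _ => ?_
        rw [heval T, Finset.mul_sum]
        exact Finset.sum_congr rfl fun d _ => by ring
    _ = ∑ d ∈ p.support, coeff d p *
          (∑ T : Finset (Fin n), (-1:F)^(n - T.card) * (if d.support ⊆ T then 1 else 0)) := by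
        rw [Finset.sum_comm]
        exact Finset.sum_congr rfl fun d _ => by rw [Finset.mul_sum]
    _ = ∑ d ∈ p.support, coeff d p * (if d.support = univ then 1 else 0) := by
        exact Finset.sum_congr rfl fun d _ => by rw [sum_compl_pow]
    _ = ∑ d ∈ p.support.filter (fun d => d.support = Finset.univ), coeff d p := by
        rw [Finset.sum_filter]
        exact Finset.sum_congr rfl fun d _ => by split <;> simp

lemma coeff_allones_pow :
    coeff (mono univ) ((∑ i, X i : MvPolynomial (Fin n) F) ^ n) = n.factorial := by
  classical
  have h := coeff_foldr (F := F) (univ : Finset (Fin n)).toList (Finset.nodup_toList _)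
    ((∑ i, X i : MvPolynomial (Fin n) F) ^ n) 0
  rw [foldr_pderiv_pow] at h
  have hlen : (univ : Finset (Fin n)).toList.length = n := by
    rw [Finset.length_toList, Finset.card_univ, Fintype.card_fin]
  have htf : (univ : Finset (Fin n)).toList.toFinset = univ := by
    simp
  rw [hlen, htf, Nat.sub_self, pow_zero, Nat.descFactorial_self] at h
  rw [mul_one] at h
  have h0 : coeff (0 : Fin n →₀ ℕ) ((n.factorial : MvPolynomial (Fin n) F)) = (n.factorial : F) := by
    rw [show ((n.factorial : ℕ) : MvPolynomial (Fin n) F) = C ((n.factorial : F)) from by simp]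
    exact coeff_zero_C _
  rw [h0] at h
  have h1 : (∏ i ∈ (univ : Finset (Fin n)), (((0 : Fin n →₀ ℕ) i + 1 : ℕ) : F)) = 1 := by
    simp
  rw [h1, one_mul, zero_add] at h
  rw [show (mono univ : Fin n →₀ ℕ) = ∑ i ∈ (univ : Finset (Fin n)), Finsupp.single i 1 from rfl]
  exact h.symm

lemma all_one_of_full (d : Fin n →₀ ℕ) (h1 : ∀ i, 1 ≤ d i) (hs : ∑ i, d i = n) :
    d = mono univ := by
  have hone : ∀ i, d i = 1 := by
    intro i
    by_contra hne
    have h2 : 2 ≤ d i := by have := h1 i; omega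
    have hlt : ∑ j : Fin n, (1 : ℕ) < ∑ j, d j :=
      Finset.sum_lt_sum (fun j _ => h1 j) ⟨i, Finset.mem_univ i, by omega⟩
    simp only [Finset.sum_const, Finset.card_univ, Fintype.card_fin, smul_eq_mul, mul_one] at hlt
    omega
  ext j
  rw [hone j, mono_apply, if_pos (Finset.mem_univ j)]

lemma part1 (Q : MvPolynomial (Fin n) F)
    (hml : ∀ i, Q.degreeOf i ≤ 1)
    (hagree : ∀ a : Fin n → F, (∀ i, a i = 0 ∨ a i = 1) →
      eval a Q = eval a ((∑ i, X i) ^ n)) :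
    Q.coeff (mono univ) = (n.factorial : F) := by
  classical
  set P : MvPolynomial (Fin n) F := (∑ i, X i) ^ n with hP
  -- support condition means full support
  have hfull : ∀ d : Fin n →₀ ℕ, d.support = univ ↔ ∀ i, 1 ≤ d i := by
    intro d
    rw [Finset.eq_univ_iff_forall]
    constructor
    · intro h i; have := Finsupp.mem_support_iff.1 (h i); omega
    · intro h i; rw [Finsupp.mem_support_iff]; have := h i; omega
  -- L Q = coeff allones Q
  have hsubQ : Q.support.filter (fun d => d.support = Finset.univ) ⊆ {mono univ} := by
    intro d hd
    rw [Finset.mem_filter] at hd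
    rw [Finset.mem_singleton]
    ext j
    have h1 : 1 ≤ d j := (hfull d).1 hd.2 j
    have h2 : d j ≤ 1 := by
      have := (MvPolynomial.degreeOf_le_iff).1 (hml j) d hd.1
      exact this
    rw [mono_apply, if_pos (Finset.mem_univ j)]
    omega
  have hLQ : ∑ d ∈ Q.support.filter (fun d => d.support = Finset.univ), coeff d Q
      = coeff (mono univ) Q := by
    rw [Finset.sum_subset hsubQ, Finset.sum_singleton]
    intro x hx hxn
    rw [Finset.mem_singleton] at hx
    subst hx
    by_contra hc
    apply hxn
    rw [Finset.mem_filter]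
    constructor
    · rwa [MvPolynomial.mem_support_iff]
    · rw [hfull]; intro i; rw [mono_apply, if_pos (Finset.mem_univ i)]
  -- L P = coeff allones P
  have hhom : P.IsHomogeneous n := by
    have h1 : (∑ i, X i : MvPolynomial (Fin n) F).IsHomogeneous 1 :=
      IsHomogeneous.sum _ _ _ (fun i _ => isHomogeneous_X _ _)
    simpa using h1.pow n
  have hsubP : P.support.filter (fun d => d.support = Finset.univ) ⊆ {mono univ} := by
    intro d hd
    rw [Finset.mem_filter] at hd
    rw [Finset.mem_singleton]
    have hdeg : ∑ i, d i = n := by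
      have hw := hhom (MvPolynomial.mem_support_iff.1 hd.1)
      replace hw : d.degree = n := by rw [Finsupp.degree_eq_weight_one]; exact hw
      have hdd : d.degree = ∑ i, d i := by
        rw [Finsupp.degree]
        exact Finset.sum_subset (Finset.subset_univ _)
          (fun x _ hx => by simpa using Finsupp.notMem_support_iff.1 hx)
      omega
    exact all_one_of_full d ((hfull d).1 hd.2) hdeg
  have hLP : ∑ d ∈ P.support.filter (fun d => d.support = Finset.univ), coeff d P
      = coeff (mono univ) P := by
    rw [Finset.sum_subset hsubP, Finset.sum_singleton]
    intro x hx hxn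
    rw [Finset.mem_singleton] at hx
    subst hx
    by_contra hc
    apply hxn
    rw [Finset.mem_filter]
    constructor
    · rwa [MvPolynomial.mem_support_iff]
    · rw [hfull]; intro i; rw [mono_apply, if_pos (Finset.mem_univ i)]
  have hLQP : (∑ T : Finset (Fin n), (-1:F)^(n - T.card) *
        eval (fun i => if i ∈ T then (1:F) else 0) Q)
      = ∑ T : Finset (Fin n), (-1:F)^(n - T.card) *
        eval (fun i => if i ∈ T then (1:F) else 0) P := by
    refine Finset.sum_congr rfl fun T _ => ?_
    rw [hagree _ (fun i => by split <;> simp)]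
  have := (L_eq Q).symm.trans (hLQP.trans (L_eq P))
  rw [hLQ, hLP] at this
  rw [this, hP, coeff_allones_pow]

section Part2

variable (Q : MvPolynomial (Fin n) F)

noncomputable def fD (S : Finset (Fin n)) : MvPolynomial (Fin n) F :=
  (Sᶜ.toList).foldr (fun i q => pderiv i q) Q

variable {Q}

lemma coeff_zero_of_two (hml : ∀ i, Q.degreeOf i ≤ 1) {d : Fin n →₀ ℕ} {i : Fin n}
    (h2 : 2 ≤ d i) : coeff d Q = 0 := by
  by_contra hc
  have hd : d ∈ Q.support := MvPolynomial.mem_support_iff.2 hc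
  have := (MvPolynomial.degreeOf_le_iff).1 (hml i) d hd
  omega

lemma coeff_fD (S T : Finset (Fin n)) :
    coeff (mono S) (fD Q T)
      = (∏ i ∈ Tᶜ, ((mono S i + 1 : ℕ) : F)) * coeff (mono S + mono Tᶜ) Q := by
  rw [fD, coeff_foldr _ (Finset.nodup_toList _)]
  rw [Finset.toList_toFinset]
  rfl

lemma mono_add_compl (S : Finset (Fin n)) : mono S + mono Sᶜ = (mono univ : Fin n →₀ ℕ) := by
  rw [mono, mono, mono, ← Finset.sum_union disjoint_compl_right, Finset.union_compl]

lemma coeff_fD_diag (hcoeff : Q.coeff (mono univ) = (n.factorial : F)) (S : Finset (Fin n)) :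
    coeff (mono S) (fD Q S) = (n.factorial : F) := by
  rw [coeff_fD, mono_add_compl, hcoeff]
  have : ∀ i ∈ Sᶜ, ((mono S i + 1 : ℕ) : F) = 1 := by
    intro i hi
    have : mono S i = 0 := by
      rw [mono_apply, if_neg (by simpa using hi)]
    rw [this]
    norm_num
  rw [Finset.prod_congr rfl this, Finset.prod_const_one, one_mul]

lemma coeff_fD_off (hml : ∀ i, Q.degreeOf i ≤ 1) {S T : Finset (Fin n)} (h : ¬ S ⊆ T) :
    coeff (mono S) (fD Q T) = 0 := by
  obtain ⟨i, hiS, hiT⟩ := Finset.not_subset.1 h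
  rw [coeff_fD]
  have h2 : 2 ≤ (mono S + mono Tᶜ) i := by
    have h1 : mono S i = 1 := by rw [mono_apply, if_pos hiS]
    have h2 : mono Tᶜ i = 1 := by rw [mono_apply, if_pos (by simpa using hiT)]
    have : (mono S + mono Tᶜ) i = mono S i + mono Tᶜ i := rfl
    omega
  rw [coeff_zero_of_two hml h2, mul_zero]

lemma fD_linearIndependent (hml : ∀ i, Q.degreeOf i ≤ 1)
    (hcoeff : Q.coeff (mono univ) = (n.factorial : F)) :
    LinearIndependent F (fD Q) := by
  rw [Fintype.linearIndependent_iff]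
  intro g hg
  have hfac : (n.factorial : F) ≠ 0 := Nat.cast_ne_zero.2 n.factorial_ne_zero
  have step : ∀ S : Finset (Fin n), (∀ T, S ⊂ T → g T = 0) → g S = 0 := by
    intro S hT
    have h0 := congrArg (coeff (mono S)) hg
    rw [MvPolynomial.coeff_sum] at h0
    simp only [MvPolynomial.coeff_smul, map_zero] at h0
    rw [Finset.sum_eq_single S] at h0
    · rw [coeff_fD_diag hcoeff, MvPolynomial.coeff_zero, smul_eq_mul] at h0
      exact (mul_eq_zero.1 h0).resolve_right hfac
    · intro T _ hTS
      by_cases hsub : S ⊆ T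
      · have : S ⊂ T := Finset.ssubset_iff_subset_ne.2 ⟨hsub, fun h => hTS h.symm⟩
        rw [hT T this, zero_smul]
      · rw [coeff_fD_off hml hsub, smul_eq_mul, mul_zero]
    · intro h; exact absurd (Finset.mem_univ S) h
  have main : ∀ k : ℕ, ∀ S : Finset (Fin n), n - S.card ≤ k → g S = 0 := by
    intro k
    induction k with
    | zero =>
      intro S hS
      have hcard : S.card = n := by
        have := Finset.card_le_univ S
        simp only [Finset.card_univ, Fintype.card_fin] at this
        omega
      have hSuniv : S = univ := Finset.eq_univ_of_card S (by simpa using hcard)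
      apply step
      intro T hT
      rw [hSuniv] at hT
      exact absurd (Finset.subset_univ T) hT.not_subset
    | succ k ih =>
      intro S hS
      apply step
      intro T hT
      apply ih
      have := Finset.card_lt_card hT
      have := Finset.card_le_univ T
      simp only [Finset.card_univ, Fintype.card_fin] at this
      omega
  intro S
  exact main n S (by omega)

end Part2

end Stmt3Aux

open Stmt3Aux in
theorem stmt3 {F : Type*} [Field F] [CharZero F] (n : ℕ) (Q : MvPolynomial (Fin n) F)
    (hml : ∀ i, Q.degreeOf i ≤ 1)
    (hagree : ∀ a : Fin n → F, (∀ i, a i = 0 ∨ a i = 1) →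
      eval a Q = eval a ((∑ i, X i) ^ n)) :
    Q.coeff (Finsupp.equivFunOnFinite.symm fun _ => 1) = (n.factorial : F) ∧
    (2 ^ n : Cardinal) ≤ Module.rank F ↥(Submodule.span F
      { R : MvPolynomial (Fin n) F |
        ∃ l : List (Fin n), R = l.foldr (fun i q => pderiv i q) Q }) := by
  have h1 : Q.coeff (mono univ) = (n.factorial : F) := part1 Q hml hagree
  constructor
  · rw [← mono_univ_eq]; exact h1
  · have hli : LinearIndependent F (fD Q) := fD_linearIndependent hml h1
    set V := Submodule.span F
        { R : MvPolynomial (Fin n) F |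
          ∃ l : List (Fin n), R = l.foldr (fun i q => pderiv i q) Q } with hV
    have hmem : ∀ S : Finset (Fin n), fD Q S ∈ V := fun S =>
      Submodule.subset_span ⟨Sᶜ.toList, rfl⟩
    let v : Finset (Fin n) → V := fun S => ⟨fD Q S, hmem S⟩
    have hv : LinearIndependent F v := by
      apply LinearIndependent.of_comp V.subtype
      convert hli
      rfl
    have hle := hv.cardinal_lift_le_rank
    rw [Cardinal.mk_fintype, Fintype.card_finset, Fintype.card_fin] at hle
    simp only [Cardinal.lift_natCast, Cardinal.lift_id'] at hle
    calc (2 ^ n : Cardinal) = ((2 ^ n : ℕ) : Cardinal) := by push_cast; ring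
      _ ≤ Module.rank F V := hle
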